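/- Let c, σ > 0, let v : [0, 1] → ℝ be twice continuously differentiable with v(0) = v(1) = 0, let φ : [0, 1] → ℝ be continuously differentiable with φ(0) = φ(1) = 0, let θ₁, δ : [0, 1] → ℝ be continuous, let y ∈ ℝ, and let K : [0, 1] → ℝ be continuous with |K(x)| ≤ |y| for all x ∈ [0, 1]. Set F(x) := c²·v''(x) − σ·φ(x) + θ₁(x)K(x) + δ(x) and D := (2(c² + 1)/σ)·∫₀¹ v'(x)φ'(x) dx + (2/σ)·∫₀¹ φ(x)F(x) dx + (2/(σc²))·∫₀¹ (φ(x) + σv(x))·(F(x) + σφ(x)) dx. Then D ≤ −( ∫₀¹ (v'(x))² dx + ∫₀¹ φ(x)² dx ) + 2·((c² + 1)²π² + σ²)/(σ²c⁴π²)·( (∫₀¹ θ₁(x)² dx)·y² + ∫₀¹ δ(x)² dx ). -/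

import Mathlib

open Real intervalIntegral MeasureTheory Set Topology Filter

set_option maxHeartbeats 2000000 in
theorem wirtinger01 (v : ℝ → ℝ) (hv : ContDiff ℝ 1 v) (hv0 : v 0 = 0) (hv1 : v 1 = 0) :
    π ^ 2 * ∫ x in (0:ℝ)..1, v x ^ 2 ≤ ∫ x in (0:ℝ)..1, (deriv v x) ^ 2 := by
  have hπ : (0:ℝ) < π := Real.pi_pos
  have hvc : Continuous v := hv.continuous
  have hvd : Differentiable ℝ v := hv.differentiable (by norm_num)
  have hv'c : Continuous (deriv v) := hv.continuous_deriv le_rfl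
  -- bound on deriv v
  obtain ⟨M, hM⟩ : ∃ M, ∀ x ∈ Icc (0:ℝ) 1, |deriv v x| ≤ M := by
    obtain ⟨M, hM⟩ := (isCompact_Icc (a := (0:ℝ)) (b := 1)).exists_bound_of_continuousOn
      hv'c.continuousOn
    exact ⟨M, fun x hx => hM x hx⟩
  have hM0 : 0 ≤ M := le_trans (abs_nonneg _) (hM 0 (by norm_num))
  -- |v x| ≤ M * x  and  |v x| ≤ M * (1 - x)
  have hvle : ∀ x ∈ Icc (0:ℝ) 1, |v x| ≤ M * x := by
    intro x hx
    have h1 : ∫ t in (0:ℝ)..x, deriv v t = v x - v 0 :=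
      integral_deriv_eq_sub (fun t _ => hvd t) (hv'c.intervalIntegrable _ _)
    rw [hv0, sub_zero] at h1
    rw [← h1]
    have := intervalIntegral.norm_integral_le_of_norm_le_const
      (C := M) (f := deriv v) (a := 0) (b := x) (fun t ht => by
        rw [uIoc_of_le hx.1] at ht
        exact hM t ⟨le_of_lt ht.1, le_trans ht.2 hx.2⟩)
    simpa [abs_of_nonneg hx.1] using this
  have hvle' : ∀ x ∈ Icc (0:ℝ) 1, |v x| ≤ M * (1 - x) := by
    intro x hx
    have h1 : ∫ t in x..(1:ℝ), deriv v t = v 1 - v x :=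
      integral_deriv_eq_sub (fun t _ => hvd t) (hv'c.intervalIntegrable _ _)
    rw [hv1, zero_sub] at h1
    have h2 : v x = -∫ t in x..(1:ℝ), deriv v t := by rw [h1]; ring
    rw [h2, abs_neg]
    have := intervalIntegral.norm_integral_le_of_norm_le_const
      (C := M) (f := deriv v) (a := x) (b := 1) (fun t ht => by
        rw [uIoc_of_le hx.2] at ht
        exact hM t ⟨le_trans hx.1 (le_of_lt ht.1), ht.2⟩)
    have h3 : |(1:ℝ) - x| = 1 - x := abs_of_nonneg (by linarith [hx.2])
    simpa [h3] using this
  -- key: |v x| ≤ M * sin (π x) on [0,1]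
  have hsinpos : ∀ x ∈ Ioo (0:ℝ) 1, 0 < Real.sin (π * x) := fun x hx =>
    Real.sin_pos_of_pos_of_lt_pi (mul_pos Real.pi_pos hx.1) (by nlinarith [hx.2, Real.pi_pos])
  have hkey : ∀ x ∈ Icc (0:ℝ) 1, |v x| ≤ M * Real.sin (π * x) := by
    intro x hx
    rcases le_or_gt x (1/2) with hhalf | hhalf
    · have hs : 2 * x ≤ Real.sin (π * x) := by
        have := Real.mul_le_sin (x := π * x) (mul_nonneg hπ.le hx.1)
          (by nlinarith [hx.1])
        calc 2*x = 2/π*(π*x) := by field_simp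
        _ ≤ _ := this
      calc |v x| ≤ M * x := hvle x hx
      _ ≤ M * Real.sin (π * x) := by nlinarith [hx.1]
    · have hs : 2 * (1 - x) ≤ Real.sin (π * x) := by
        have h4 : Real.sin (π * x) = Real.sin (π * (1 - x)) := by
          rw [mul_sub, mul_one, Real.sin_pi_sub]
        have := Real.mul_le_sin (x := π * (1 - x)) (mul_nonneg hπ.le (by linarith [hx.2]))
          (by nlinarith [hx.1])
        rw [h4]
        calc 2*(1-x) = 2/π*(π*(1-x)) := by field_simp
        _ ≤ _ := this
      calc |v x| ≤ M * (1 - x) := hvle' x hx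
      _ ≤ M * Real.sin (π * x) := by nlinarith [hx.2]
  -- auxiliary functions
  set ct : ℝ → ℝ := fun x => Real.cos (π * x) / Real.sin (π * x) with hct
  set g : ℝ → ℝ := fun x => π * v x ^ 2 * ct x with hg
  set h : ℝ → ℝ := fun x =>
    2 * π * v x * deriv v x * ct x - π ^ 2 * v x ^ 2 / Real.sin (π * x) ^ 2 with hh
  have hg0 : g 0 = 0 := by simp [hg, hv0]
  have hg1 : g 1 = 0 := by simp [hg, hv1]
  have hh0 : h 0 = 0 := by simp [hh, hv0]
  have hh1 : h 1 = 0 := by simp [hh, hv1]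
  -- derivative of g on the interior
  have hgderiv : ∀ x ∈ Ioo (0:ℝ) 1, HasDerivAt g (h x) x := by
    intro x hx
    have hs := hsinpos x hx
    have hsne : Real.sin (π * x) ≠ 0 := ne_of_gt hs
    have hsin : HasDerivAt (fun x : ℝ => Real.sin (π * x)) (π * Real.cos (π * x)) x := by
      simpa [mul_comm] using ((hasDerivAt_id x).const_mul π).sin
    have hcos : HasDerivAt (fun x : ℝ => Real.cos (π * x)) (-(π * Real.sin (π * x))) x := by
      simpa [mul_comm] using ((hasDerivAt_id x).const_mul π).cos
    have hctd : HasDerivAt ct (-π / Real.sin (π * x) ^ 2) x := by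
      have hd := hcos.div hsin hsne
      have hnum : -(π * Real.sin (π * x)) * Real.sin (π * x) -
          Real.cos (π * x) * (π * Real.cos (π * x)) = -π := by
        linear_combination (-π) * Real.sin_sq_add_cos_sq (π * x)
      rw [hnum] at hd
      exact hd
    have hv2 : HasDerivAt (fun x => π * v x ^ 2) (π * (2 * v x * deriv v x)) x := by
      exact (((hvd x).hasDerivAt.pow 2).const_mul π).congr_deriv (by ring)
    have := hv2.mul hctd
    refine this.congr_deriv ?_
    simp only [hh]
    field_simp
    ring
  -- bound |v t * ct t| ≤ M on [0,1]
  have h2 : ∀ t ∈ Icc (0:ℝ) 1, |v t * ct t| ≤ M := by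
    intro t ht
    rcases eq_or_lt_of_le ht.1 with h0 | h0
    · simp [← h0, hv0, hM0]
    rcases eq_or_lt_of_le ht.2 with h1 | h1
    · simp [h1, hv1, hM0]
    have hs := hsinpos t ⟨h0, h1⟩
    have hc1 : |Real.cos (π * t)| ≤ 1 := Real.abs_cos_le_one _
    have hineq : |v t| * |Real.cos (π * t)| ≤ M * Real.sin (π * t) := by
      nlinarith [hkey t ht, abs_nonneg (v t), abs_nonneg (Real.cos (π * t))]
    calc |v t * ct t| = |v t| * |Real.cos (π * t)| / Real.sin (π * t) := by
          simp only [hct]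
          rw [abs_mul, abs_div, abs_of_pos hs, mul_div_assoc]
      _ ≤ M := by rw [div_le_iff₀ hs]; linarith
  -- |g t| ≤ π M |v t| on [0,1]
  have hgb : ∀ t ∈ Icc (0:ℝ) 1, |g t| ≤ π * M * |v t| := by
    intro t ht
    have e : |g t| = π * |v t| * |v t * ct t| := by
      simp only [hg]
      rw [abs_mul, abs_mul, abs_of_pos hπ, abs_pow, abs_mul]
      ring
    calc |g t| = π * |v t| * |v t * ct t| := e
      _ ≤ π * |v t| * M := by
          have := h2 t ht
          have h3 : 0 ≤ π * |v t| := by positivity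
          nlinarith
      _ = π * M * |v t| := by ring
  -- continuity of g on [0,1]
  have hgcont : ContinuousOn g (Icc 0 1) := by
    intro t ht
    have hcontM : Continuous fun t => π * M * |v t| := by continuity
    rcases eq_or_lt_of_le ht.1 with h0 | h0
    · have h0' : t = 0 := h0.symm
      subst h0'
      have htend : Tendsto (fun t => π * M * |v t|) (𝓝[Icc (0:ℝ) 1] 0) (𝓝 0) := by
        have h := (hcontM.tendsto 0).mono_left (nhdsWithin_le_nhds (s := Icc (0:ℝ) 1))
        simpa only [hv0, abs_zero, mul_zero] using h
      have : Tendsto g (𝓝[Icc (0:ℝ) 1] 0) (𝓝 0) := by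
        apply squeeze_zero_norm' _ htend
        exact Filter.eventually_of_mem self_mem_nhdsWithin
          (fun t ht => by rw [Real.norm_eq_abs]; exact hgb t ht)
      unfold ContinuousWithinAt
      rwa [hg0]
    rcases eq_or_lt_of_le ht.2 with h1 | h1
    · subst h1
      have htend : Tendsto (fun t => π * M * |v t|) (𝓝[Icc (0:ℝ) 1] 1) (𝓝 0) := by
        have h := (hcontM.tendsto 1).mono_left (nhdsWithin_le_nhds (s := Icc (0:ℝ) 1))
        simpa only [hv1, abs_zero, mul_zero] using h
      have : Tendsto g (𝓝[Icc (0:ℝ) 1] 1) (𝓝 0) := by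
        apply squeeze_zero_norm' _ htend
        exact Filter.eventually_of_mem self_mem_nhdsWithin
          (fun t ht => by rw [Real.norm_eq_abs]; exact hgb t ht)
      unfold ContinuousWithinAt
      rwa [hg1]
    · have hs := hsinpos t ⟨h0, h1⟩
      have : ContinuousAt g t := by
        simp only [hg, hct]
        exact (continuousAt_const.mul ((hvc.continuousAt).pow 2)).mul
          (((Real.continuous_cos.comp (continuous_const.mul continuous_id)).continuousAt).div
            ((Real.continuous_sin.comp (continuous_const.mul continuous_id)).continuousAt)
            (ne_of_gt hs))
      exact this.continuousWithinAt
  -- integrability of h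
  have hmeas : Measurable h := by
    simp only [hh, hct]
    have m1 : Measurable (deriv v) := measurable_deriv v
    have m2 : Measurable v := hvc.measurable
    have msin : Measurable fun t : ℝ => Real.sin (π * t) :=
      (Real.continuous_sin.comp (continuous_const.mul continuous_id)).measurable
    have mcos : Measurable fun t : ℝ => Real.cos (π * t) :=
      (Real.continuous_cos.comp (continuous_const.mul continuous_id)).measurable
    exact ((((measurable_const.mul m2).mul m1).mul (mcos.div msin)).sub
      (((measurable_const.mul (m2.pow measurable_const))).div (msin.pow measurable_const)))
  have hdivM : ∀ t ∈ Ioo (0:ℝ) 1, |v t| / Real.sin (π * t) ≤ M := by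
    intro t ht
    rw [div_le_iff₀ (hsinpos t ht)]
    exact hkey t ⟨ht.1.le, ht.2.le⟩
  have hbound : ∀ t ∈ Ioc (0:ℝ) 1, ‖h t‖ ≤ 2 * π * M * M + π ^ 2 * M * M := by
    intro t ht
    rcases eq_or_lt_of_le ht.2 with h1 | h1
    · rw [h1, hh1, norm_zero]; positivity
    have htI : t ∈ Ioo (0:ℝ) 1 := ⟨ht.1, h1⟩
    have htc : t ∈ Icc (0:ℝ) 1 := ⟨ht.1.le, h1.le⟩
    have hs := hsinpos t htI
    have hA : |2 * π * v t * deriv v t * ct t| ≤ 2 * π * M * M := by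
      have e : |2 * π * v t * deriv v t * ct t| = 2 * π * (|deriv v t| * |v t * ct t|) := by
        rw [show 2 * π * v t * deriv v t * ct t = 2 * π * (deriv v t * (v t * ct t)) by ring,
          abs_mul, abs_mul, abs_mul, abs_of_pos hπ, abs_two]
      rw [e]
      have hprod : |deriv v t| * |v t * ct t| ≤ M * M :=
        mul_le_mul (hM t htc) (h2 t htc) (abs_nonneg _) hM0
      nlinarith [hπ, hprod]
    have hB : |π ^ 2 * v t ^ 2 / Real.sin (π * t) ^ 2| ≤ π ^ 2 * M * M := by
      have e : |π ^ 2 * v t ^ 2 / Real.sin (π * t) ^ 2| =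
          π ^ 2 * (|v t| / Real.sin (π * t)) ^ 2 := by
        rw [abs_div, abs_mul, abs_of_pos (by positivity : (0:ℝ) < π ^ 2),
          abs_of_pos (by positivity : (0:ℝ) < Real.sin (π * t) ^ 2), abs_pow, div_pow,
          mul_div_assoc]
      rw [e]
      have hd := hdivM t htI
      have h0 : 0 ≤ |v t| / Real.sin (π * t) := by positivity
      have hprod : (|v t| / Real.sin (π * t)) ^ 2 ≤ M * M := by
        rw [sq]; exact mul_le_mul hd hd h0 hM0
      calc π ^ 2 * (|v t| / Real.sin (π * t)) ^ 2 ≤ π ^ 2 * (M * M) :=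
            mul_le_mul_of_nonneg_left hprod (sq_nonneg π)
        _ = π ^ 2 * M * M := by ring
    calc ‖h t‖ = |2 * π * v t * deriv v t * ct t - π ^ 2 * v t ^ 2 / Real.sin (π * t) ^ 2| := by
          simp only [hh, Real.norm_eq_abs]
      _ ≤ |2 * π * v t * deriv v t * ct t| + |π ^ 2 * v t ^ 2 / Real.sin (π * t) ^ 2| :=
          abs_sub _ _
      _ ≤ 2 * π * M * M + π ^ 2 * M * M := add_le_add hA hB
  have hinth : IntervalIntegrable h volume 0 1 := by
    rw [intervalIntegrable_iff_integrableOn_Ioc_of_le (by norm_num : (0:ℝ) ≤ 1)]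
    apply Measure.integrableOn_of_bounded (M := 2 * π * M * M + π ^ 2 * M * M)
      measure_Ioc_lt_top.ne hmeas.aestronglyMeasurable
    exact (ae_restrict_iff' measurableSet_Ioc).mpr (Filter.Eventually.of_forall hbound)
  -- FTC: ∫ h = g 1 - g 0 = 0
  have hFTC : ∫ x in (0:ℝ)..1, h x = 0 := by
    rw [intervalIntegral.integral_eq_sub_of_hasDeriv_right_of_le (by norm_num) hgcont
      (fun x hx => (hgderiv x hx).hasDerivWithinAt) hinth, hg0, hg1, sub_zero]
  -- pointwise inequality
  have hpt : ∀ u ∈ Icc (0:ℝ) 1, 0 ≤ (fun x => (deriv v x) ^ 2 - π ^ 2 * v x ^ 2 - h x) u := by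
    intro u hu
    simp only
    rcases eq_or_lt_of_le hu.1 with h0 | h0
    · rw [← h0, hh0, hv0]; nlinarith [sq_nonneg (deriv v 0)]
    rcases eq_or_lt_of_le hu.2 with h1 | h1
    · rw [h1, hh1, hv1]; nlinarith [sq_nonneg (deriv v 1)]
    have hs := hsinpos u ⟨h0, h1⟩
    have hsne := ne_of_gt hs
    have key : (deriv v u) ^ 2 - π ^ 2 * v u ^ 2 - h u = (deriv v u - π * v u * ct u) ^ 2 := by
      simp only [hh, hct]
      field_simp
      ring_nf
      simp only [Real.cos_sq']
      ring
    rw [key]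
    positivity
  -- conclusion
  have i1 : IntervalIntegrable (fun x => (deriv v x) ^ 2) volume 0 1 :=
    ((hv'c.pow 2).intervalIntegrable _ _)
  have i2 : IntervalIntegrable (fun x => π ^ 2 * v x ^ 2) volume 0 1 :=
    ((continuous_const.mul (hvc.pow 2)).intervalIntegrable _ _)
  have hnn := intervalIntegral.integral_nonneg (μ := volume) (by norm_num : (0:ℝ) ≤ 1) hpt
  rw [intervalIntegral.integral_sub (i1.sub i2) hinth, intervalIntegral.integral_sub i1 i2,
    intervalIntegral.integral_const_mul, hFTC, sub_zero] at hnn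
  linarith

lemma integral_sq_expand (f g : ℝ → ℝ) (hf : Continuous f) (hg : Continuous g) (α : ℝ) :
    ∫ x in (0:ℝ)..1, (f x - α * g x) ^ 2 =
      (∫ x in (0:ℝ)..1, f x ^ 2) - 2 * α * (∫ x in (0:ℝ)..1, f x * g x) +
        α ^ 2 * ∫ x in (0:ℝ)..1, g x ^ 2 := by
  rw [show (fun x => (f x - α * g x) ^ 2) =
      fun x => (f x ^ 2 - 2 * α * (f x * g x)) + α ^ 2 * g x ^ 2 from funext fun x => by ring]
  rw [intervalIntegral.integral_add (f := fun x => f x ^ 2 - 2 * α * (f x * g x))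
      (g := fun x => α ^ 2 * g x ^ 2)
      (((hf.pow 2).sub (continuous_const.mul (hf.mul hg))).intervalIntegrable _ _)
      ((continuous_const.mul (hg.pow 2)).intervalIntegrable _ _),
    intervalIntegral.integral_sub (f := fun x => f x ^ 2) (g := fun x => 2 * α * (f x * g x))
      ((hf.pow 2).intervalIntegrable _ _)
      ((continuous_const.mul (hf.mul hg)).intervalIntegrable _ _),
    intervalIntegral.integral_const_mul, intervalIntegral.integral_const_mul]

lemma young_int (f g : ℝ → ℝ) (hf : Continuous f) (hg : Continuous g) (α : ℝ) :
    2 * α * (∫ x in (0:ℝ)..1, f x * g x) ≤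
      (∫ x in (0:ℝ)..1, f x ^ 2) + α ^ 2 * ∫ x in (0:ℝ)..1, g x ^ 2 := by
  have h0 : 0 ≤ ∫ x in (0:ℝ)..1, (f x - α * g x) ^ 2 :=
    intervalIntegral.integral_nonneg (μ := MeasureTheory.volume) (by norm_num)
      (fun u _ => sq_nonneg _)
  rw [integral_sq_expand f g hf hg α] at h0
  linarith

set_option maxHeartbeats 2000000 in
/-- The dissipation estimate (4.18) for the wave PDE with viscous damping (Case C):
for `c, σ > 0`, `v ∈ C²` and `φ ∈ C¹` vanishing at `0` and `1`, continuous `θ₁, δ` and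
continuous `K` with `|K(x)| ≤ |y|` on `[0,1]`, setting
`F = c²v'' − σφ + θ₁K + δ` and
`D = (2(c² + 1)/σ)∫₀¹ v'φ' + (2/σ)∫₀¹ φF + (2/(σc²))∫₀¹ (φ + σv)(F + σφ)`,
one has `D ≤ −(∫₀¹(v')² + ∫₀¹φ²) + 2((c² + 1)²π² + σ²)/(σ²c⁴π²)((∫₀¹θ₁²)y² + ∫₀¹δ²)`. -/
theorem wave_dissipation_estimate (c σ : ℝ) (hc : 0 < c) (hσ : 0 < σ)
    (v φ θ₁ δ K : ℝ → ℝ) (y : ℝ)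
    (hv : ContDiff ℝ 2 v) (hv0 : v 0 = 0) (hv1 : v 1 = 0)
    (hφ : ContDiff ℝ 1 φ) (hφ0 : φ 0 = 0) (hφ1 : φ 1 = 0)
    (hθ₁ : Continuous θ₁) (hδ : Continuous δ) (hK : Continuous K)
    (hKy : ∀ x ∈ Set.Icc (0 : ℝ) 1, |K x| ≤ |y|)
    (F : ℝ → ℝ)
    (hF : ∀ x, F x = c ^ 2 * deriv (deriv v) x - σ * φ x + θ₁ x * K x + δ x)
    (D : ℝ)
    (hD : D = (2 * (c ^ 2 + 1) / σ) * (∫ x in (0 : ℝ)..1, deriv v x * deriv φ x) +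
      (2 / σ) * (∫ x in (0 : ℝ)..1, φ x * F x) +
      (2 / (σ * c ^ 2)) * ∫ x in (0 : ℝ)..1, (φ x + σ * v x) * (F x + σ * φ x)) :
    D ≤ -((∫ x in (0 : ℝ)..1, (deriv v x) ^ 2) + ∫ x in (0 : ℝ)..1, (φ x) ^ 2) +
      2 * ((c ^ 2 + 1) ^ 2 * Real.pi ^ 2 + σ ^ 2) / (σ ^ 2 * c ^ 4 * Real.pi ^ 2) *
        ((∫ x in (0 : ℝ)..1, (θ₁ x) ^ 2) * y ^ 2 + ∫ x in (0 : ℝ)..1, (δ x) ^ 2) := by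
  have hπ : (0:ℝ) < π := Real.pi_pos
  have hπ0 : (π:ℝ) ≠ 0 := ne_of_gt hπ
  have hc0 : c ≠ 0 := ne_of_gt hc
  have hσ0 : σ ≠ 0 := ne_of_gt hσ
  -- continuity facts
  have hvc : Continuous v := hv.continuous
  have hvd : Differentiable ℝ v := hv.differentiable (by norm_num)
  have hv1' : ContDiff ℝ 1 (deriv v) := by
    have : ContDiff ℝ (1+1 : ℕ) v := by norm_num [hv]
    exact ((contDiff_succ_iff_deriv (n := 1)).mp this).2.2
  have hv'c : Continuous (deriv v) := hv1'.continuous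
  have hv'd : Differentiable ℝ (deriv v) := hv1'.differentiable (by norm_num)
  have hv''c : Continuous (deriv (deriv v)) := hv1'.continuous_deriv le_rfl
  have hφc : Continuous φ := hφ.continuous
  have hφd : Differentiable ℝ φ := hφ.differentiable (by norm_num)
  have hφ'c : Continuous (deriv φ) := hφ.continuous_deriv le_rfl
  set G : ℝ → ℝ := fun x => θ₁ x * K x + δ x with hGdef
  have hGc : Continuous G := (hθ₁.mul hK).add hδ
  -- integration by parts
  have ibp1 : ∫ x in (0:ℝ)..1, φ x * deriv (deriv v) x
      = -∫ x in (0:ℝ)..1, deriv φ x * deriv v x := by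
    have := intervalIntegral.integral_mul_deriv_eq_deriv_mul (a := (0:ℝ)) (b := 1)
      (u := φ) (u' := deriv φ) (v := deriv v) (v' := deriv (deriv v))
      (fun x _ => (hφd x).hasDerivAt) (fun x _ => (hv'd x).hasDerivAt)
      (hφ'c.intervalIntegrable _ _) (hv''c.intervalIntegrable _ _)
    rw [this, hφ0, hφ1]
    ring
  have ibp2 : ∫ x in (0:ℝ)..1, v x * deriv (deriv v) x
      = -∫ x in (0:ℝ)..1, (deriv v x) ^ 2 := by
    have := intervalIntegral.integral_mul_deriv_eq_deriv_mul (a := (0:ℝ)) (b := 1)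
      (u := v) (u' := deriv v) (v := deriv v) (v' := deriv (deriv v))
      (fun x _ => (hvd x).hasDerivAt) (fun x _ => (hv'd x).hasDerivAt)
      (hv'c.intervalIntegrable _ _) (hv''c.intervalIntegrable _ _)
    rw [this, hv0, hv1]
    rw [show (∫ x in (0:ℝ)..1, deriv v x * deriv v x) = ∫ x in (0:ℝ)..1, (deriv v x)^2 from
      intervalIntegral.integral_congr (fun x _ => by rw [sq])]
    ring
  -- expand the second integral in D
  have hI2 : ∫ x in (0:ℝ)..1, φ x * F x
      = c ^ 2 * (∫ x in (0:ℝ)..1, φ x * deriv (deriv v) x)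
        - σ * (∫ x in (0:ℝ)..1, (φ x) ^ 2) + ∫ x in (0:ℝ)..1, φ x * G x := by
    rw [show (fun x => φ x * F x) =
        fun x => (c ^ 2 * (φ x * deriv (deriv v) x) - σ * (φ x) ^ 2) + φ x * G x from
      funext fun x => by rw [hF]; simp only [hGdef]; ring]
    rw [intervalIntegral.integral_add
        (f := fun x => c ^ 2 * (φ x * deriv (deriv v) x) - σ * (φ x) ^ 2) (g := fun x => φ x * G x)
        (((continuous_const.mul (hφc.mul hv''c)).sub
          (continuous_const.mul (hφc.pow 2))).intervalIntegrable _ _)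
        ((hφc.mul hGc).intervalIntegrable _ _),
      intervalIntegral.integral_sub
        (f := fun x => c ^ 2 * (φ x * deriv (deriv v) x)) (g := fun x => σ * (φ x) ^ 2)
        ((continuous_const.mul (hφc.mul hv''c)).intervalIntegrable _ _)
        ((continuous_const.mul (hφc.pow 2)).intervalIntegrable _ _),
      intervalIntegral.integral_const_mul, intervalIntegral.integral_const_mul]
  -- expand the third integral in D
  have hI3 : ∫ x in (0:ℝ)..1, (φ x + σ * v x) * (F x + σ * φ x)
      = c ^ 2 * (∫ x in (0:ℝ)..1, φ x * deriv (deriv v) x)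
        + (∫ x in (0:ℝ)..1, φ x * G x)
        + σ * c ^ 2 * (∫ x in (0:ℝ)..1, v x * deriv (deriv v) x)
        + σ * ∫ x in (0:ℝ)..1, v x * G x := by
    rw [show (fun x => (φ x + σ * v x) * (F x + σ * φ x)) =
        fun x => ((c ^ 2 * (φ x * deriv (deriv v) x) + φ x * G x)
          + σ * c ^ 2 * (v x * deriv (deriv v) x)) + σ * (v x * G x) from
      funext fun x => by rw [hF]; simp only [hGdef]; ring]
    rw [intervalIntegral.integral_add
        (f := fun x => (c ^ 2 * (φ x * deriv (deriv v) x) + φ x * G x)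
          + σ * c ^ 2 * (v x * deriv (deriv v) x)) (g := fun x => σ * (v x * G x))
        ((((continuous_const.mul (hφc.mul hv''c)).add (hφc.mul hGc)).add
          (continuous_const.mul (hvc.mul hv''c))).intervalIntegrable _ _)
        ((continuous_const.mul (hvc.mul hGc)).intervalIntegrable _ _),
      intervalIntegral.integral_add
        (f := fun x => c ^ 2 * (φ x * deriv (deriv v) x) + φ x * G x)
        (g := fun x => σ * c ^ 2 * (v x * deriv (deriv v) x))
        (((continuous_const.mul (hφc.mul hv''c)).add (hφc.mul hGc)).intervalIntegrable _ _)
        ((continuous_const.mul (hvc.mul hv''c)).intervalIntegrable _ _),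
      intervalIntegral.integral_add
        (f := fun x => c ^ 2 * (φ x * deriv (deriv v) x)) (g := fun x => φ x * G x)
        ((continuous_const.mul (hφc.mul hv''c)).intervalIntegrable _ _)
        ((hφc.mul hGc).intervalIntegrable _ _),
      intervalIntegral.integral_const_mul, intervalIntegral.integral_const_mul,
      intervalIntegral.integral_const_mul]
  -- the value of D
  have hDval : D = -2 * (∫ x in (0:ℝ)..1, (deriv v x) ^ 2)
      - 2 * (∫ x in (0:ℝ)..1, (φ x) ^ 2)
      + (2 * (c ^ 2 + 1) / (σ * c ^ 2)) * (∫ x in (0:ℝ)..1, φ x * G x)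
      + (2 / c ^ 2) * ∫ x in (0:ℝ)..1, v x * G x := by
    rw [hD, hI2, hI3, ibp1, ibp2,
      show (∫ x in (0:ℝ)..1, deriv v x * deriv φ x) = ∫ x in (0:ℝ)..1, deriv φ x * deriv v x from
        intervalIntegral.integral_congr (fun x _ => mul_comm _ _)]
    field_simp
    ring
  -- Young's inequalities
  have hY1 := young_int φ G hφc hGc ((c ^ 2 + 1) / (σ * c ^ 2))
  have hY2 := young_int v G hvc hGc (1 / (π ^ 2 * c ^ 2))
  have hY2' := mul_le_mul_of_nonneg_left hY2 (sq_nonneg π)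
  -- Wirtinger
  have hW := wirtinger01 v (hv.of_le (by norm_num)) hv0 hv1
  have hWv2 : 0 ≤ (∫ x in (0:ℝ)..1, v x ^ 2) := by
    exact intervalIntegral.integral_nonneg (μ := MeasureTheory.volume) (by norm_num)
      (fun u _ => sq_nonneg _)
  -- bound on ∫ G²
  have hGsq : ∫ x in (0:ℝ)..1, G x ^ 2
      ≤ 2 * (∫ x in (0:ℝ)..1, (θ₁ x) ^ 2) * y ^ 2 + 2 * ∫ x in (0:ℝ)..1, (δ x) ^ 2 := by
    have hrhs : ∫ x in (0:ℝ)..1, (2 * y ^ 2 * (θ₁ x) ^ 2 + 2 * (δ x) ^ 2)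
        = 2 * (∫ x in (0:ℝ)..1, (θ₁ x) ^ 2) * y ^ 2 + 2 * ∫ x in (0:ℝ)..1, (δ x) ^ 2 := by
      rw [intervalIntegral.integral_add
          (f := fun x => 2 * y ^ 2 * (θ₁ x) ^ 2) (g := fun x => 2 * (δ x) ^ 2)
          ((continuous_const.mul (hθ₁.pow 2)).intervalIntegrable _ _)
          ((continuous_const.mul (hδ.pow 2)).intervalIntegrable _ _),
        intervalIntegral.integral_const_mul, intervalIntegral.integral_const_mul]
      ring
    rw [← hrhs]
    apply intervalIntegral.integral_mono_on (by norm_num)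
      ((hGc.pow 2).intervalIntegrable _ _)
      (((continuous_const.mul (hθ₁.pow 2)).add
        (continuous_const.mul (hδ.pow 2))).intervalIntegrable _ _)
    intro x hx
    have hKsq : K x ^ 2 ≤ y ^ 2 := by
      nlinarith [hKy x hx, abs_nonneg (K x), sq_abs (K x), sq_abs y]
    simp only [hGdef, Pi.add_apply, Pi.mul_apply, Pi.pow_apply]
    nlinarith [sq_nonneg (θ₁ x * K x - δ x), sq_nonneg (θ₁ x),
      mul_le_mul_of_nonneg_left hKsq (sq_nonneg (θ₁ x))]
  -- assemble
  have hGsqnn : 0 ≤ ∫ x in (0:ℝ)..1, G x ^ 2 :=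
    intervalIntegral.integral_nonneg (μ := MeasureTheory.volume) (by norm_num)
      (fun u _ => sq_nonneg _)
  set P := ∫ x in (0:ℝ)..1, (deriv v x) ^ 2
  set C1 := ∫ x in (0:ℝ)..1, (φ x) ^ 2
  set E := ∫ x in (0:ℝ)..1, φ x * G x
  set Q := ∫ x in (0:ℝ)..1, v x * G x
  set S := ∫ x in (0:ℝ)..1, G x ^ 2
  set T := (∫ x in (0:ℝ)..1, (θ₁ x) ^ 2) * y ^ 2 + ∫ x in (0:ℝ)..1, (δ x) ^ 2
  -- rewrite Young 2 with clean coefficients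
  have e1 : π ^ 2 * (2 * (1 / (π ^ 2 * c ^ 2)) * Q) = 2 / c ^ 2 * Q := by
    field_simp
  have e2 : π ^ 2 * ((∫ x in (0:ℝ)..1, v x ^ 2) + (1 / (π ^ 2 * c ^ 2)) ^ 2 * S)
      = π ^ 2 * (∫ x in (0:ℝ)..1, v x ^ 2) + 1 / (π ^ 2 * c ^ 4) * S := by
    field_simp
  rw [e1, e2] at hY2'
  have hβ : 2 * ((c ^ 2 + 1) ^ 2 * π ^ 2 + σ ^ 2) / (σ ^ 2 * c ^ 4 * π ^ 2)
      = 2 * (((c ^ 2 + 1) / (σ * c ^ 2)) ^ 2 + 1 / (π ^ 2 * c ^ 4)) := by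
    field_simp
  have hβnn : (0:ℝ) ≤ ((c ^ 2 + 1) / (σ * c ^ 2)) ^ 2 + 1 / (π ^ 2 * c ^ 4) := by positivity
  have hfin : (((c ^ 2 + 1) / (σ * c ^ 2)) ^ 2 + 1 / (π ^ 2 * c ^ 4)) * S
      ≤ (((c ^ 2 + 1) / (σ * c ^ 2)) ^ 2 + 1 / (π ^ 2 * c ^ 4)) * (2 * T) := by
    apply mul_le_mul_of_nonneg_left _ hβnn
    calc S ≤ 2 * (∫ x in (0:ℝ)..1, (θ₁ x) ^ 2) * y ^ 2 + 2 * ∫ x in (0:ℝ)..1, (δ x) ^ 2 := hGsq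
    _ = 2 * T := by rw [show T = (∫ x in (0:ℝ)..1, (θ₁ x) ^ 2) * y ^ 2
          + ∫ x in (0:ℝ)..1, (δ x) ^ 2 from rfl]; ring
  rw [hβ]
  have h2a : 2 * (c ^ 2 + 1) / (σ * c ^ 2) = 2 * ((c ^ 2 + 1) / (σ * c ^ 2)) := by ring
  rw [h2a] at hDval
  nlinarith [hY1, hY2', hW, hDval, hfin]
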